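/- For every real x with 0 < x < π/2, log(sin(x)²/x²) > −x²/2 and log(sinh(x)²/x²) < x²/2. -/

import Mathlib

open Real Set

lemma aux_sin_gt (x : ℝ) (hx : 0 < x) : x - x ^ 3 / 6 < Real.sin x := by
  have h : StrictMonoOn (fun y : ℝ => Real.sin y - (y - y ^ 3 / 6)) (Set.Ici 0) := by
    apply strictMonoOn_of_deriv_pos (convex_Ici 0)
    · fun_prop
    · intro y hy
      rw [interior_Ici] at hy
      have hd : HasDerivAt (fun y : ℝ => Real.sin y - (y - y ^ 3 / 6))
          (Real.cos y - (1 - 3 * y ^ 2 / 6)) y := by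
        have := (Real.hasDerivAt_sin y).sub
          ((hasDerivAt_id y).sub ((hasDerivAt_pow 3 y).div_const 6))
        exact this.congr_deriv (by norm_num)
      rw [hd.deriv]
      have hc := Real.one_sub_sq_div_two_lt_cos (x := y) (ne_of_gt hy)
      nlinarith
  have := h (Set.self_mem_Ici) (Set.mem_Ici.2 hx.le) hx
  simpa using this

lemma aux_sinh_lt (x : ℝ) (hx : 0 < x) : Real.sinh x < x * Real.cosh x := by
  have h : StrictMonoOn (fun y : ℝ => y * Real.cosh y - Real.sinh y) (Set.Ici 0) := by
    apply strictMonoOn_of_deriv_pos (convex_Ici 0)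
    · fun_prop
    · intro y hy
      rw [interior_Ici] at hy
      have hd : HasDerivAt (fun y : ℝ => y * Real.cosh y - Real.sinh y)
          (1 * Real.cosh y + y * Real.sinh y - Real.cosh y) y := by
        exact ((hasDerivAt_id y).mul (Real.hasDerivAt_cosh y)).sub (Real.hasDerivAt_sinh y)
      rw [hd.deriv]
      have hsp := Real.sinh_pos_iff.2 hy
      have hy' : (0:ℝ) < y := hy
      nlinarith [mul_pos hy' hsp]
  have := h (Set.self_mem_Ici) (Set.mem_Ici.2 hx.le) hx
  simp at this
  linarith

theorem stmt_12 (x : ℝ) (hx0 : 0 < x) (hx : x < Real.pi / 2) :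
    Real.log (Real.sin x ^ 2 / x ^ 2) > -x ^ 2 / 2 ∧
    Real.log (Real.sinh x ^ 2 / x ^ 2) < x ^ 2 / 2 := by
  have hxpi : x < Real.pi := hx.trans (by linarith [Real.pi_pos])
  have hsin : 0 < Real.sin x := Real.sin_pos_of_pos_of_lt_pi hx0 hxpi
  have hsinh : 0 < Real.sinh x := Real.sinh_pos_iff.2 hx0
  constructor
  · -- log (sin x ^2 / x^2) > -x^2/2
    have hq : Real.sin x ^ 2 / x ^ 2 = (Real.sin x / x) ^ 2 := by
      rw [div_pow]
    rw [hq, Real.log_pow, gt_iff_lt]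
    have hpos : 0 < Real.sin x / x := div_pos hsin hx0
    have hkey : Real.exp (-(x ^ 2) / 4) < Real.sin x / x := by
      -- exp(-u) ≤ 1/(1+u+u²/2) ≤ 1 - u + u²/2 with u = x²/4
      have hu : (0:ℝ) ≤ x ^ 2 / 4 := by positivity
      have h1 : 1 + x ^ 2 / 4 + (x ^ 2 / 4) ^ 2 / 2 ≤ Real.exp (x ^ 2 / 4) :=
        Real.quadratic_le_exp_of_nonneg hu
      have h2 : Real.exp (-(x ^ 2) / 4) = 1 / Real.exp (x ^ 2 / 4) := by
        rw [one_div, ← Real.exp_neg]; ring_nf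
      have hpe : (0:ℝ) < 1 + x ^ 2 / 4 + (x ^ 2 / 4) ^ 2 / 2 := by positivity
      have h3 : Real.exp (-(x ^ 2) / 4) ≤ 1 / (1 + x ^ 2 / 4 + (x ^ 2 / 4) ^ 2 / 2) := by
        rw [h2]
        exact one_div_le_one_div_of_le hpe h1
      have h4 : 1 / (1 + x ^ 2 / 4 + (x ^ 2 / 4) ^ 2 / 2) ≤ 1 - x ^ 2 / 4 + (x ^ 2 / 4) ^ 2 / 2 := by
        rw [div_le_iff₀ hpe]
        nlinarith [sq_nonneg x, sq_nonneg (x^2)]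
      have h5 : x - x ^ 3 / 6 < Real.sin x := aux_sin_gt x hx0
      have hxx : x ^ 2 < 8 / 3 := by
        have hpi : Real.pi < 3.15 := Real.pi_lt_d2
        nlinarith
      have h6 : 1 - x ^ 2 / 4 + (x ^ 2 / 4) ^ 2 / 2 < Real.sin x / x := by
        rw [lt_div_iff₀ hx0]
        nlinarith
      linarith
    have hlog : -(x ^ 2) / 4 < Real.log (Real.sin x / x) :=
      (Real.lt_log_iff_exp_lt hpos).2 hkey
    push_cast
    linarith
  · -- log (sinh x ^2 / x^2) < x^2/2
    have hq : Real.sinh x ^ 2 / x ^ 2 = (Real.sinh x / x) ^ 2 := by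
      rw [div_pow]
    rw [hq, Real.log_pow]
    have hpos : 0 < Real.sinh x / x := div_pos hsinh hx0
    have hkey : Real.sinh x / x < Real.exp (x ^ 2 / 4) := by
      have h1 : Real.sinh x = 2 * Real.sinh (x / 2) * Real.cosh (x / 2) := by
        have := Real.sinh_two_mul (x / 2)
        rw [show 2 * (x / 2) = x by ring] at this
        linarith
      have h2 : Real.sinh (x / 2) < x / 2 * Real.cosh (x / 2) :=
        aux_sinh_lt (x / 2) (by linarith)
      have hcpos : 0 < Real.cosh (x / 2) := Real.cosh_pos (x/2)
      have h3 : Real.sinh x < x * Real.cosh (x / 2) ^ 2 := by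
        rw [h1]; nlinarith
      have h4 : Real.cosh (x / 2) ^ 2 ≤ Real.exp (x ^ 2 / 4) := by
        have := Real.cosh_le_exp_half_sq (x / 2)
        have h5 : Real.cosh (x / 2) ^ 2 ≤ Real.exp ((x / 2) ^ 2 / 2) ^ 2 := by
          nlinarith [Real.cosh_pos (x / 2)]
        calc Real.cosh (x / 2) ^ 2 ≤ Real.exp ((x / 2) ^ 2 / 2) ^ 2 := h5
          _ = Real.exp (x ^ 2 / 4) := by
            rw [← Real.exp_nat_mul]
            ring_nf
      rw [div_lt_iff₀ hx0]
      calc Real.sinh x < x * Real.cosh (x / 2) ^ 2 := h3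
        _ ≤ x * Real.exp (x ^ 2 / 4) := by nlinarith
        _ = Real.exp (x ^ 2 / 4) * x := by ring
    have hlog : Real.log (Real.sinh x / x) < x ^ 2 / 4 :=
      (Real.log_lt_iff_lt_exp hpos).2 hkey
    push_cast
    linarith
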